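/- For every probability vector v ∈ ℝ^N (nonnegative entries summing to 1), the sequence of iterates T^t v converges as t → ∞ to the normalized optimal asymptotic cooling state p₀·π, where π_k = e^{−2εk} and p₀ = (1 − e^{−2ε})/(1 − e^{−2εN}). -/

import Mathlib

open Real Matrix Finset

/-- The TSAC transition matrix `T` on the diagonal of the computation-qubit density
matrix: `N = 2^n`, `z = e^ε + e^{-ε}`, `T 0 0 = T 0 1 = e^ε/z`,
`T (N-1) (N-2) = T (N-1) (N-1) = e^{-ε}/z`, and for `0 < i < N-1`,
`T i (i-1) = e^{-ε}/z`, `T i (i+1) = e^ε/z`; all other entries vanish. -/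
noncomputable def Tmat (n : ℕ) (ε : ℝ) : Matrix (Fin (2 ^ n)) (Fin (2 ^ n)) ℝ :=
  fun i j =>
    if (i : ℕ) = 0 then
      if (j : ℕ) ≤ 1 then Real.exp ε / (Real.exp ε + Real.exp (-ε)) else 0
    else if (i : ℕ) = 2 ^ n - 1 then
      if 2 ^ n - 2 ≤ (j : ℕ) then Real.exp (-ε) / (Real.exp ε + Real.exp (-ε)) else 0
    else if (j : ℕ) + 1 = (i : ℕ) then Real.exp (-ε) / (Real.exp ε + Real.exp (-ε))
    else if (j : ℕ) = (i : ℕ) + 1 then Real.exp ε / (Real.exp ε + Real.exp (-ε))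
    else 0

lemma spike_sum {N : ℕ} (c : ℕ) (hc : c < N) (w : ℝ) :
    ∑ i : Fin N, (if (i : ℕ) = c then w else 0) = w := by
  rw [Finset.sum_eq_single_of_mem ⟨c, hc⟩ (Finset.mem_univ _)]
  · simp
  · intro i _ hne
    exact if_neg fun h => hne (Fin.ext h)

lemma spike_sum_mul {N : ℕ} (c : ℕ) (hc : c < N) (w : ℝ) (f : Fin N → ℝ) :
    ∑ j : Fin N, (if (j : ℕ) = c then w else 0) * f j = w * f ⟨c, hc⟩ := by
  rw [Finset.sum_eq_single_of_mem ⟨c, hc⟩ (Finset.mem_univ _)]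
  · simp
  · intro j _ hne
    rw [if_neg fun h => hne (Fin.ext h), zero_mul]

lemma l1_bound {ι : Type*} [Fintype ι] (A : Matrix ι ι ℝ) (c : ℝ)
    (hA : ∀ i j, 0 ≤ A i j) (hcol : ∀ j, ∑ i, A i j ≤ c) (u : ι → ℝ) :
    ∑ i, |A.mulVec u i| ≤ c * ∑ i, |u i| := by
  have h1 : ∀ i, |A.mulVec u i| ≤ ∑ j, A i j * |u j| := by
    intro i
    refine (Finset.abs_sum_le_sum_abs _ _).trans (le_of_eq ?_)
    exact Finset.sum_congr rfl fun j _ => by rw [abs_mul, abs_of_nonneg (hA i j)]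
  calc ∑ i, |A.mulVec u i| ≤ ∑ i, ∑ j, A i j * |u j| := Finset.sum_le_sum fun i _ => h1 i
    _ = ∑ j, (∑ i, A i j) * |u j| := by
        rw [Finset.sum_comm]
        exact Finset.sum_congr rfl fun j _ => (Finset.sum_mul _ _ _).symm
    _ ≤ ∑ j, c * |u j| := Finset.sum_le_sum fun j _ =>
        mul_le_mul_of_nonneg_right (hcol j) (abs_nonneg _)
    _ = c * ∑ j, |u j| := (Finset.mul_sum _ _ _).symm

lemma sum_mulVec {ι : Type*} [Fintype ι] (A : Matrix ι ι ℝ)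
    (hcol : ∀ j, ∑ i, A i j = 1) (u : ι → ℝ) :
    ∑ i, A.mulVec u i = ∑ j, u j := by
  simp only [Matrix.mulVec, dotProduct]
  rw [Finset.sum_comm]
  exact Finset.sum_congr rfl fun j _ => by rw [← Finset.sum_mul, hcol j, one_mul]

lemma entry_le_mul {ι : Type*} [Fintype ι] (A B : Matrix ι ι ℝ)
    (hA : ∀ i j, 0 ≤ A i j) (hB : ∀ i j, 0 ≤ B i j) (i j k : ι) :
    A i k * B k j ≤ (A * B) i j := by
  rw [Matrix.mul_apply]
  exact Finset.single_le_sum (f := fun k' => A i k' * B k' j)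
    (fun k' _ => mul_nonneg (hA _ _) (hB _ _)) (Finset.mem_univ k)

lemma pow_nonneg_entries {ι : Type*} [Fintype ι] [DecidableEq ι] (A : Matrix ι ι ℝ)
    (hA : ∀ i j, 0 ≤ A i j) : ∀ m, ∀ i j, 0 ≤ (A ^ m) i j := by
  intro m
  induction m with
  | zero => intro i j; rw [pow_zero, Matrix.one_apply]; split <;> norm_num
  | succ m ih =>
      intro i j
      rw [pow_succ, Matrix.mul_apply]
      exact Finset.sum_nonneg fun k _ => mul_nonneg (ih i k) (hA k j)

lemma pow_colsum {ι : Type*} [Fintype ι] [DecidableEq ι] (A : Matrix ι ι ℝ)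
    (hcol : ∀ j, ∑ i, A i j = 1) : ∀ m, ∀ j, ∑ i, (A ^ m) i j = 1 := by
  intro m
  induction m with
  | zero =>
      intro j
      simp [Matrix.one_apply, Finset.sum_ite_eq]
  | succ m ih =>
      intro j
      simp only [pow_succ, Matrix.mul_apply]
      rw [Finset.sum_comm]
      calc ∑ k, ∑ i, (A ^ m) i k * A k j
          = ∑ k, (∑ i, (A ^ m) i k) * A k j := by
            exact Finset.sum_congr rfl fun k _ => (Finset.sum_mul _ _ _).symm
        _ = ∑ k, A k j := Finset.sum_congr rfl fun k _ => by rw [ih k, one_mul]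
        _ = 1 := hcol j

lemma Tmat_col (n : ℕ) (ε : ℝ) (hN : 2 ≤ 2 ^ n) (i j : Fin (2 ^ n)) :
    Tmat n ε i j =
      (if (i : ℕ) = (j : ℕ) - 1 then Real.exp ε / (Real.exp ε + Real.exp (-ε)) else 0)
    + (if (i : ℕ) = min ((j : ℕ) + 1) (2 ^ n - 1)
        then Real.exp (-ε) / (Real.exp ε + Real.exp (-ε)) else 0) := by
  have hi := i.isLt; have hj := j.isLt
  unfold Tmat
  split_ifs <;> first | (exfalso; omega) | ring1

lemma Tmat_row (n : ℕ) (ε : ℝ) (hN : 2 ≤ 2 ^ n) (i j : Fin (2 ^ n)) :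
    Tmat n ε i j =
      (if (j : ℕ) = (i : ℕ) - 1
        then (if (i : ℕ) = 0 then Real.exp ε / (Real.exp ε + Real.exp (-ε))
              else Real.exp (-ε) / (Real.exp ε + Real.exp (-ε))) else 0)
    + (if (j : ℕ) = min ((i : ℕ) + 1) (2 ^ n - 1)
        then (if (i : ℕ) = 2 ^ n - 1 then Real.exp (-ε) / (Real.exp ε + Real.exp (-ε))
              else Real.exp ε / (Real.exp ε + Real.exp (-ε))) else 0) := by
  have hi := i.isLt; have hj := j.isLt
  unfold Tmat
  split_ifs <;> first | (exfalso; omega) | ring1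

lemma Tmat_colsum (n : ℕ) (ε : ℝ) (hN : 2 ≤ 2 ^ n) (j : Fin (2 ^ n)) :
    ∑ i, Tmat n ε i j = 1 := by
  have hz : (0 : ℝ) < Real.exp ε + Real.exp (-ε) := by positivity
  have hj := j.isLt
  rw [Finset.sum_congr rfl fun i _ => Tmat_col n ε hN i j, Finset.sum_add_distrib,
    spike_sum _ (by omega) _, spike_sum _ (by omega) _, ← add_div, div_self hz.ne']
lemma Tmat_pi (n : ℕ) (ε : ℝ) (hN : 2 ≤ 2 ^ n) :
    (Tmat n ε).mulVec (fun k : Fin (2 ^ n) => Real.exp (-2 * ε * (k : ℕ)))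
      = fun k : Fin (2 ^ n) => Real.exp (-2 * ε * (k : ℕ)) := by
  have hz : (0 : ℝ) < Real.exp ε + Real.exp (-ε) := by positivity
  have e3 : Real.exp ε * Real.exp (-ε) = 1 := by rw [← Real.exp_add]; simp
  funext i
  have hi := i.isLt
  simp only [Matrix.mulVec, dotProduct]
  rw [Finset.sum_congr rfl fun j _ => by rw [Tmat_row n ε hN i j],
    Finset.sum_congr rfl fun j _ => add_mul _ _ _, Finset.sum_add_distrib,
    spike_sum_mul _ (by omega) _ _, spike_sum_mul _ (by omega) _ _]
  simp only [Fin.val_mk]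
  by_cases h0 : (i : ℕ) = 0
  · rw [if_pos h0, if_neg (by omega), h0]
    rw [show (0 - 1 : ℕ) = 0 from rfl, show min (0 + 1) (2 ^ n - 1) = 1 by omega]
    rw [Nat.cast_zero, Nat.cast_one]
    rw [show -2 * ε * (0 : ℝ) = 0 by ring, Real.exp_zero]
    have e2 : Real.exp (-2 * ε * (1 : ℝ)) = Real.exp 0 * Real.exp (-ε) ^ 2 := by
      rw [pow_two, ← Real.exp_add, ← Real.exp_add]; congr 1; ring
    rw [e2, Real.exp_zero]
    rw [div_mul_eq_mul_div, div_mul_eq_mul_div, ← add_div, div_eq_iff hz.ne']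
    linear_combination Real.exp (-ε) * e3
  · by_cases hlast : (i : ℕ) = 2 ^ n - 1
    · rw [if_neg h0, if_pos hlast]
      rw [show min ((i : ℕ) + 1) (2 ^ n - 1) = (i : ℕ) by omega]
      have hc : ((((i : ℕ) - 1 : ℕ)) : ℝ) = ((i : ℕ) : ℝ) - 1 := by
        rw [Nat.cast_sub (by omega)]; norm_num
      rw [hc]
      have e1 : Real.exp (-2 * ε * (((i : ℕ) : ℝ) - 1))
          = Real.exp (-2 * ε * ((i : ℕ) : ℝ)) * Real.exp ε ^ 2 := by
        rw [pow_two, ← Real.exp_add, ← Real.exp_add]; congr 1; ring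
      rw [e1]
      rw [div_mul_eq_mul_div, div_mul_eq_mul_div, ← add_div, div_eq_iff hz.ne']
      linear_combination Real.exp (-2 * ε * ((i : ℕ) : ℝ)) * Real.exp ε * e3
    · rw [if_neg h0, if_neg hlast]
      rw [show min ((i : ℕ) + 1) (2 ^ n - 1) = (i : ℕ) + 1 by omega]
      have hc : ((((i : ℕ) - 1 : ℕ)) : ℝ) = ((i : ℕ) : ℝ) - 1 := by
        rw [Nat.cast_sub (by omega)]; norm_num
      rw [hc, Nat.cast_add, Nat.cast_one]
      have e1 : Real.exp (-2 * ε * (((i : ℕ) : ℝ) - 1))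
          = Real.exp (-2 * ε * ((i : ℕ) : ℝ)) * Real.exp ε ^ 2 := by
        rw [pow_two, ← Real.exp_add, ← Real.exp_add]; congr 1; ring
      have e2 : Real.exp (-2 * ε * (((i : ℕ) : ℝ) + 1))
          = Real.exp (-2 * ε * ((i : ℕ) : ℝ)) * Real.exp (-ε) ^ 2 := by
        rw [pow_two, ← Real.exp_add, ← Real.exp_add]; congr 1; ring
      rw [e1, e2]
      rw [div_mul_eq_mul_div, div_mul_eq_mul_div, ← add_div, div_eq_iff hz.ne']
      linear_combination (Real.exp (-2 * ε * ((i : ℕ) : ℝ)) * Real.exp ε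
        + Real.exp (-2 * ε * ((i : ℕ) : ℝ)) * Real.exp (-ε)) * e3
lemma Tmat_nonneg (n : ℕ) (ε : ℝ) (i j : Fin (2 ^ n)) : 0 ≤ Tmat n ε i j := by
  unfold Tmat; split_ifs <;> positivity

lemma Tmat_pos_00 (n : ℕ) (ε : ℝ) (h0 : 0 < 2 ^ n) :
    0 < Tmat n ε ⟨0, h0⟩ ⟨0, h0⟩ := by
  simp only [Tmat, Fin.val_mk]
  split_ifs <;> first | positivity | omega | exact ‹False›.elim

lemma Tmat_pos_down (n : ℕ) (ε : ℝ) (k : ℕ) (hk : k + 1 < 2 ^ n) :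
    0 < Tmat n ε ⟨k, by omega⟩ ⟨k + 1, hk⟩ := by
  simp only [Tmat, Fin.val_mk]
  split_ifs <;> first | positivity | omega | exact ‹False›.elim

lemma Tmat_pos_up (n : ℕ) (ε : ℝ) (k : ℕ) (hk : k + 1 < 2 ^ n) :
    0 < Tmat n ε ⟨k + 1, hk⟩ ⟨k, by omega⟩ := by
  simp only [Tmat, Fin.val_mk]
  split_ifs <;> first | positivity | omega | exact ‹False›.elim

lemma Tmat_pow_pos_0k (n : ℕ) (ε : ℝ) (h0 : 0 < 2 ^ n) :
    ∀ k (hk : k < 2 ^ n), 0 < (Tmat n ε ^ k) ⟨0, h0⟩ ⟨k, hk⟩ := by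
  intro k
  induction k with
  | zero => intro hk; simp [Matrix.one_apply]
  | succ k ih =>
      intro hk
      have hk' : k < 2 ^ n := by omega
      calc (0 : ℝ) < (Tmat n ε ^ k) ⟨0, h0⟩ ⟨k, hk'⟩ * Tmat n ε ⟨k, hk'⟩ ⟨k + 1, hk⟩ :=
            mul_pos (ih hk') (Tmat_pos_down n ε k hk)
        _ ≤ (Tmat n ε ^ k * Tmat n ε) ⟨0, h0⟩ ⟨k + 1, hk⟩ :=
            entry_le_mul _ _ (pow_nonneg_entries _ (Tmat_nonneg n ε) k) (Tmat_nonneg n ε) _ _ _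
        _ = (Tmat n ε ^ (k + 1)) ⟨0, h0⟩ ⟨k + 1, hk⟩ := by rw [← pow_succ]

lemma Tmat_pow_pos_k0 (n : ℕ) (ε : ℝ) (h0 : 0 < 2 ^ n) :
    ∀ k (hk : k < 2 ^ n), 0 < (Tmat n ε ^ k) ⟨k, hk⟩ ⟨0, h0⟩ := by
  intro k
  induction k with
  | zero => intro hk; simp [Matrix.one_apply]
  | succ k ih =>
      intro hk
      have hk' : k < 2 ^ n := by omega
      calc (0 : ℝ) < Tmat n ε ⟨k + 1, hk⟩ ⟨k, hk'⟩ * (Tmat n ε ^ k) ⟨k, hk'⟩ ⟨0, h0⟩ :=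
            mul_pos (Tmat_pos_up n ε k hk) (ih hk')
        _ ≤ (Tmat n ε * Tmat n ε ^ k) ⟨k + 1, hk⟩ ⟨0, h0⟩ :=
            entry_le_mul _ _ (Tmat_nonneg n ε) (pow_nonneg_entries _ (Tmat_nonneg n ε) k) _ _ _
        _ = (Tmat n ε ^ (k + 1)) ⟨k + 1, hk⟩ ⟨0, h0⟩ := by rw [← pow_succ']

lemma Tmat_pow_pos_00 (n : ℕ) (ε : ℝ) (h0 : 0 < 2 ^ n) :
    ∀ m, 0 < (Tmat n ε ^ m) ⟨0, h0⟩ ⟨0, h0⟩ := by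
  intro m
  induction m with
  | zero => simp [Matrix.one_apply]
  | succ m ih =>
      calc (0 : ℝ) < (Tmat n ε ^ m) ⟨0, h0⟩ ⟨0, h0⟩ * Tmat n ε ⟨0, h0⟩ ⟨0, h0⟩ :=
            mul_pos ih (Tmat_pos_00 n ε h0)
        _ ≤ (Tmat n ε ^ m * Tmat n ε) ⟨0, h0⟩ ⟨0, h0⟩ :=
            entry_le_mul _ _ (pow_nonneg_entries _ (Tmat_nonneg n ε) m) (Tmat_nonneg n ε) _ _ _
        _ = (Tmat n ε ^ (m + 1)) ⟨0, h0⟩ ⟨0, h0⟩ := by rw [← pow_succ]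

lemma Tmat_pow2N_pos (n : ℕ) (ε : ℝ) (i j : Fin (2 ^ n)) :
    0 < (Tmat n ε ^ (2 * 2 ^ n)) i j := by
  have h0 : 0 < 2 ^ n := Nat.pow_pos (by norm_num)
  have hi := i.isLt; have hj := j.isLt
  have hsplit : 2 * 2 ^ n = (i : ℕ) + ((2 * 2 ^ n - (i : ℕ) - (j : ℕ)) + (j : ℕ)) := by omega
  rw [hsplit, pow_add, pow_add]
  have hTn := Tmat_nonneg n ε
  have hP := pow_nonneg_entries _ hTn
  calc (0 : ℝ)
      < (Tmat n ε ^ (i : ℕ)) i ⟨0, h0⟩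
        * ((Tmat n ε ^ (2 * 2 ^ n - (i : ℕ) - (j : ℕ))) ⟨0, h0⟩ ⟨0, h0⟩
          * (Tmat n ε ^ (j : ℕ)) ⟨0, h0⟩ j) := by
        refine mul_pos ?_ (mul_pos (Tmat_pow_pos_00 n ε h0 _) ?_)
        · have := Tmat_pow_pos_k0 n ε h0 (i : ℕ) hi
          simpa using this
        · have := Tmat_pow_pos_0k n ε h0 (j : ℕ) hj
          simpa using this
    _ ≤ (Tmat n ε ^ (i : ℕ)) i ⟨0, h0⟩
        * ((Tmat n ε ^ (2 * 2 ^ n - (i : ℕ) - (j : ℕ)) * Tmat n ε ^ (j : ℕ)) ⟨0, h0⟩ j) := by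
        refine mul_le_mul_of_nonneg_left ?_ (hP _ _ _)
        exact entry_le_mul _ _ (hP _) (hP _) _ _ _
    _ ≤ (Tmat n ε ^ (i : ℕ) * (Tmat n ε ^ (2 * 2 ^ n - (i : ℕ) - (j : ℕ)) * Tmat n ε ^ (j : ℕ))) i j := by
        refine entry_le_mul _ _ (hP _) ?_ _ _ _
        intro a b
        rw [Matrix.mul_apply]
        exact Finset.sum_nonneg fun c _ => mul_nonneg (hP _ _ _) (hP _ _ _)

/-- For every probability vector `v ∈ ℝ^N`, the iterates `T^t v` converge as
`t → ∞` to the normalized optimal asymptotic cooling state `p₀ • π`, where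
`π k = e^{-2εk}` and `p₀ = (1 - e^{-2ε})/(1 - e^{-2εN})`. -/
theorem tsac_converges_to_oas (n : ℕ) (hn : 1 ≤ n) (ε : ℝ) (hε : 0 < ε) :
    ∀ v : Fin (2 ^ n) → ℝ, (∀ k, 0 ≤ v k) → (∑ k, v k = 1) →
      Filter.Tendsto (fun t : ℕ => (Tmat n ε ^ t).mulVec v) Filter.atTop
        (nhds (fun k : Fin (2 ^ n) =>
          (1 - Real.exp (-2 * ε)) / (1 - Real.exp (-2 * ε * 2 ^ n)) *
            Real.exp (-2 * ε * (k : ℕ)))) := by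
  intro v hv0 hv1
  have hN2 : 2 ≤ 2 ^ n := by
    calc 2 = 2 ^ 1 := (pow_one 2).symm
    _ ≤ 2 ^ n := Nat.pow_le_pow_right (by norm_num) hn
  have h0 : 0 < 2 ^ n := by omega
  set T : Matrix (Fin (2 ^ n)) (Fin (2 ^ n)) ℝ := Tmat n ε with hTdef
  -- the target stationary vector
  set P : Fin (2 ^ n) → ℝ := fun k =>
    (1 - Real.exp (-2 * ε)) / (1 - Real.exp (-2 * ε * 2 ^ n)) * Real.exp (-2 * ε * (k : ℕ))
    with hPdef
  -- geometric facts
  set r : ℝ := Real.exp (-2 * ε) with hrdef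
  have hr0 : 0 < r := Real.exp_pos _
  have hr1 : r < 1 := by
    rw [hrdef, ← Real.exp_zero]
    exact Real.exp_lt_exp.mpr (by nlinarith)
  have hrN : r ^ 2 ^ n < 1 := pow_lt_one₀ hr0.le hr1 (by omega)
  have hcast : Real.exp (-2 * ε * (2 : ℝ) ^ n) = r ^ 2 ^ n := by
    rw [hrdef, ← Real.exp_nat_mul]
    congr 1
    push_cast
    ring
  -- sum of P is 1
  have hexp_pow : ∀ k : ℕ, Real.exp (-2 * ε * k) = r ^ k := by
    intro k
    rw [hrdef, ← Real.exp_nat_mul]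
    congr 1
    ring
  have hPsum : ∑ k, P k = 1 := by
    rw [hPdef]
    simp only
    rw [← Finset.mul_sum]
    rw [Fin.sum_univ_eq_sum_range (fun k => Real.exp (-2 * ε * k)) (2 ^ n)]
    rw [Finset.sum_congr rfl fun k _ => hexp_pow k, geom_sum_eq hr1.ne (2 ^ n), hcast]
    rw [div_mul_div_comm]
    rw [div_eq_one_iff_eq (by nlinarith)]
    ring
  -- stationarity
  have hstat : ∀ t : ℕ, (T ^ t).mulVec P = P := by
    have h1 : T.mulVec P = P := by
      have hP' : P = ((1 - r) / (1 - r ^ 2 ^ n)) •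
          (fun k : Fin (2 ^ n) => Real.exp (-2 * ε * (k : ℕ))) := by
        funext k
        rw [hPdef]
        simp only [Pi.smul_apply, smul_eq_mul, hcast, hrdef]
      rw [hP', Matrix.mulVec_smul, hTdef, Tmat_pi n ε hN2]
    intro t
    induction t with
    | zero => rw [pow_zero, Matrix.one_mulVec]
    | succ t ih => rw [pow_succ', ← Matrix.mulVec_mulVec, ih, h1]
  -- the difference vector
  set u : Fin (2 ^ n) → ℝ := v - P with hudef
  have husum : ∑ k, u k = 0 := by
    rw [hudef]
    simp only [Pi.sub_apply]
    rw [Finset.sum_sub_distrib, hv1, hPsum, sub_self]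
  -- column-stochasticity facts
  have hTcol : ∀ j, ∑ i, T i j = 1 := Tmat_colsum n ε hN2
  have hTnn : ∀ i j, 0 ≤ T i j := Tmat_nonneg n ε
  have hTtnn : ∀ t, ∀ i j, 0 ≤ (T ^ t) i j := fun t => pow_nonneg_entries T hTnn t
  have hTtcol : ∀ t j, ∑ i, (T ^ t) i j = 1 := pow_colsum T hTcol
  -- Doeblin constant
  set m : ℕ := 2 * 2 ^ n with hmdef
  have hm0 : 0 < m := by omega
  set S : Matrix (Fin (2 ^ n)) (Fin (2 ^ n)) ℝ := T ^ m with hSdef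
  have hSpos : ∀ i j, 0 < S i j := fun i j => Tmat_pow2N_pos n ε i j
  have hne : (Finset.univ.image (fun p : Fin (2 ^ n) × Fin (2 ^ n) => S p.1 p.2)).Nonempty := by
    refine Finset.Nonempty.image ?_ _
    exact ⟨(⟨0, h0⟩, ⟨0, h0⟩), Finset.mem_univ _⟩
  set δ : ℝ := (Finset.univ.image (fun p : Fin (2 ^ n) × Fin (2 ^ n) => S p.1 p.2)).min' hne
    with hδdef
  have hδle : ∀ i j, δ ≤ S i j := fun i j =>
    Finset.min'_le _ _ (Finset.mem_image.mpr ⟨(i, j), Finset.mem_univ _, rfl⟩)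
  have hδpos : 0 < δ := by
    obtain ⟨p, -, hp⟩ := Finset.mem_image.mp (Finset.min'_mem _ hne)
    rw [hδdef, ← hp]  -- careful
    exact hSpos p.1 p.2
  set cc : ℝ := 1 - (2 ^ n : ℝ) * δ with hccdef
  have hNδ : (2 ^ n : ℝ) * δ ≤ 1 := by
    have h1 : (2 ^ n : ℝ) * δ = ∑ _i : Fin (2 ^ n), δ := by
      rw [Finset.sum_const, Finset.card_univ, Fintype.card_fin, nsmul_eq_mul]
      push_cast
      ring
    rw [h1]
    calc ∑ _i : Fin (2 ^ n), δ ≤ ∑ i, S i ⟨0, h0⟩ :=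
          Finset.sum_le_sum fun i _ => hδle i ⟨0, h0⟩
      _ = 1 := hTtcol m ⟨0, h0⟩
  have hcc0 : 0 ≤ cc := by rw [hccdef]; linarith
  have hcc1 : cc < 1 := by
    rw [hccdef]
    have : 0 < (2 ^ n : ℝ) * δ := by positivity
    linarith
  -- Doeblin contraction
  have hDoeblin : ∀ w : Fin (2 ^ n) → ℝ, (∑ k, w k = 0) →
      ∑ i, |S.mulVec w i| ≤ cc * ∑ i, |w i| := by
    intro w hw
    have hrw : S.mulVec w = (Matrix.of fun i j => S i j - δ).mulVec w := by
      funext i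
      simp only [Matrix.mulVec, dotProduct, Matrix.of_apply]
      rw [Finset.sum_congr rfl fun j _ => sub_mul (S i j) δ (w j), Finset.sum_sub_distrib,
        ← Finset.mul_sum, hw, mul_zero, sub_zero]
    rw [hrw]
    apply l1_bound
    · intro i j
      simp only [Matrix.of_apply, sub_nonneg]
      exact hδle i j
    · intro j
      simp only [Matrix.of_apply]
      rw [Finset.sum_sub_distrib, hTtcol m j, Finset.sum_const, Finset.card_univ,
        Fintype.card_fin, nsmul_eq_mul, hccdef]
      exact le_of_eq (by push_cast; ring)
  -- L1 monotonicity
  have hmono : ∀ w : Fin (2 ^ n) → ℝ, ∑ i, |T.mulVec w i| ≤ ∑ i, |w i| := by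
    intro w
    simpa using l1_bound T 1 hTnn (fun j => le_of_eq (hTcol j)) w
  have hmonopow : ∀ t, ∀ w : Fin (2 ^ n) → ℝ, ∑ i, |(T ^ t).mulVec w i| ≤ ∑ i, |w i| := by
    intro t
    induction t with
    | zero => intro w; rw [pow_zero, Matrix.one_mulVec]
    | succ t ih =>
        intro w
        rw [pow_succ', ← Matrix.mulVec_mulVec]
        exact (hmono _).trans (ih w)
  have hzeropow : ∀ t, ∑ k, ((T ^ t).mulVec u) k = 0 := by
    intro t
    rw [sum_mulVec _ (hTtcol t) u, husum]
  -- iterated contraction bound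
  have hbound : ∀ q t, q * m ≤ t → ∑ i, |((T ^ t).mulVec u) i| ≤ cc ^ q * ∑ i, |u i| := by
    intro q
    induction q with
    | zero => intro t _; simpa using hmonopow t u
    | succ q ih =>
        intro t ht
        rw [Nat.succ_mul] at ht
        have hts : t = m + (t - m) := by omega
        rw [hts, pow_add, ← Matrix.mulVec_mulVec]
        calc ∑ i, |S.mulVec ((T ^ (t - m)).mulVec u) i|
            ≤ cc * ∑ i, |((T ^ (t - m)).mulVec u) i| := hDoeblin _ (hzeropow _)
          _ ≤ cc * (cc ^ q * ∑ i, |u i|) :=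
              mul_le_mul_of_nonneg_left (ih (t - m) (by omega)) hcc0
          _ = cc ^ (q + 1) * ∑ i, |u i| := by ring
  -- conclude coordinatewise
  rw [tendsto_pi_nhds]
  intro k
  have hdiff : ∀ t : ℕ, ((T ^ t).mulVec v) k - P k = ((T ^ t).mulVec u) k := by
    intro t
    rw [hudef, Matrix.mulVec_sub, hstat t]
    simp [Pi.sub_apply]
  have habs : ∀ t : ℕ, |((T ^ t).mulVec v) k - P k| ≤ cc ^ (t / m) * ∑ i, |u i| := by
    intro t
    rw [hdiff t]
    exact (Finset.single_le_sum (f := fun i => |((T ^ t).mulVec u) i|)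
      (fun i _ => abs_nonneg _) (Finset.mem_univ k)).trans
      (hbound (t / m) t (Nat.div_mul_le_self t m))
  have hdiv : Filter.Tendsto (fun t : ℕ => t / m) Filter.atTop Filter.atTop := by
    apply Filter.tendsto_atTop_atTop.mpr
    intro b
    exact ⟨b * m, fun t ht => (Nat.le_div_iff_mul_le hm0).mpr ht⟩
  have hg : Filter.Tendsto (fun t : ℕ => cc ^ (t / m) * ∑ i, |u i|)
      Filter.atTop (nhds 0) := by
    have := ((tendsto_pow_atTop_nhds_zero_of_lt_one hcc0 hcc1).comp hdiv).mul_const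
      (∑ i, |u i|)
    simpa using this
  have hzero : Filter.Tendsto (fun t : ℕ => ((T ^ t).mulVec v) k - P k)
      Filter.atTop (nhds 0) :=
    squeeze_zero_norm (fun t => by simpa [Real.norm_eq_abs] using habs t) hg
  have := hzero.add_const (P k)
  simpa using this
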